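/- Let (X,b,m) be a connected, locally finite, countably infinite weighted graph and fix x₀∈X. If there is a constant C>0 such that D_-(r) ≤ C·r for all r≥1, where D_-(r)=max_{x∈S_r} Deg_-(x), then for every λ<0 there exists a function v : X→(0,∞) which vanishes at infinity and satisfies 𝓛v(x) ≥ λ·v(x) for every x∈X; in particular the graph satisfies the Feller property. -/

import Mathlib

/-- A function on a countable set vanishes at infinity if, for every `ε > 0`,
the set where `|f| ≥ ε` is finite. -/
def VanishesAtInfty {V : Type*} (f : V → ℝ) : Prop :=
  ∀ ε > (0 : ℝ), {x | ε ≤ |f x|}.Finite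

/-- `(X, b, m)` is a weighted graph: nonnegative symmetric edge weight with vanishing
diagonal, locally finite, positive measure, connected. -/
def IsWeightedGraph {V : Type*} (b : V → V → ℝ) (m : V → ℝ) : Prop :=
  (∀ x y, 0 ≤ b x y) ∧ (∀ x y, b x y = b y x) ∧ (∀ x, b x x = 0) ∧
    (∀ x, {y | 0 < b x y}.Finite) ∧ (∀ x, 0 < m x) ∧
    (∀ x y, Relation.ReflTransGen (fun a c => 0 < b a c) x y)

/-- The formal graph Laplacian `𝓛f(x) = (1/m x) ∑_y b x y (f x − f y)`. -/
noncomputable def lap {V : Type*} (b : V → V → ℝ) (m : V → ℝ) (f : V → ℝ) (x : V) : ℝ :=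
  (1 / m x) * ∑' y, b x y * (f x - f y)

/-- The weighted degree `Deg(x) = (1/m x) ∑_y b x y`. -/
noncomputable def deg {V : Type*} (b : V → V → ℝ) (m : V → ℝ) (x : V) : ℝ :=
  (1 / m x) * ∑' y, b x y

/-- The combinatorial graph metric: the least length of a path of edges joining `x` to `y`. -/
noncomputable def graphDist {V : Type*} (b : V → V → ℝ) (x y : V) : ℕ :=
  sInf {n | ∃ f : ℕ → V, f 0 = x ∧ f n = y ∧ ∀ i < n, 0 < b (f i) (f (i + 1))}

/-- The sphere `S_r = {x | d(x,x₀) = r}` around `x₀`. -/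
def sphere' {V : Type*} (b : V → V → ℝ) (x₀ : V) (r : ℕ) : Set V :=
  {x | graphDist b x₀ x = r}

/-- The inner degree `Deg_-(x) = (1/m x) ∑_{y ∈ S_{d(x₀,x)−1}} b x y` of a vertex `x`
(with respect to the centre `x₀`). -/
noncomputable def degMinus {V : Type*} (b : V → V → ℝ) (m : V → ℝ) (x₀ : V) (x : V) : ℝ :=
  (1 / m x) * ∑' y, (if graphDist b x₀ y + 1 = graphDist b x₀ x then b x y else 0)

section aux
variable {V : Type*} (b : V → V → ℝ) (x₀ : V)

lemma exists_path' {x y : V}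
    (h : Relation.ReflTransGen (fun a c => 0 < b a c) x y) :
    {n : ℕ | ∃ f : ℕ → V, f 0 = x ∧ f n = y ∧ ∀ i < n, 0 < b (f i) (f (i + 1))}.Nonempty := by
  induction h with
  | refl => exact ⟨0, fun _ => x, rfl, rfl, fun i hi => absurd hi (Nat.not_lt_zero i)⟩
  | @tail u c _ hbc ih =>
    obtain ⟨n, f, hf0, hfn, hstep⟩ := ih
    refine ⟨n + 1, fun i => if i ≤ n then f i else c, by simp [hf0], by simp, ?_⟩
    intro i hi
    rcases Nat.lt_or_ge i n with h1 | h1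
    · simp only [if_pos (Nat.le_of_lt h1), if_pos (Nat.succ_le_of_lt h1)]
      exact hstep i h1
    · have hin : i = n := by omega
      subst hin
      simp only [le_refl, if_pos, if_neg (Nat.not_succ_le_self _), hfn]
      exact hbc

lemma graphDist_spec {x : V}
    (h : Relation.ReflTransGen (fun a c => 0 < b a c) x₀ x) :
    ∃ f : ℕ → V, f 0 = x₀ ∧ f (graphDist b x₀ x) = x ∧
      ∀ i < graphDist b x₀ x, 0 < b (f i) (f (i + 1)) :=
  Nat.sInf_mem (exists_path' b h)

lemma graphDist_le {x : V} {n : ℕ}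
    (hn : ∃ f : ℕ → V, f 0 = x₀ ∧ f n = x ∧ ∀ i < n, 0 < b (f i) (f (i + 1))) :
    graphDist b x₀ x ≤ n :=
  Nat.sInf_le hn

lemma eq_of_graphDist_zero {x : V}
    (h : Relation.ReflTransGen (fun a c => 0 < b a c) x₀ x)
    (h0 : graphDist b x₀ x = 0) : x = x₀ := by
  obtain ⟨f, hf0, hfn, _⟩ := graphDist_spec b x₀ h
  rw [h0] at hfn
  rw [← hfn, hf0]

lemma graphDist_le_of_adj {x y : V}
    (h : Relation.ReflTransGen (fun a c => 0 < b a c) x₀ x)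
    (hxy : 0 < b x y) :
    graphDist b x₀ y ≤ graphDist b x₀ x + 1 := by
  obtain ⟨f, hf0, hfn, hstep⟩ := graphDist_spec b x₀ h
  refine graphDist_le b x₀
    ⟨fun i => if i ≤ graphDist b x₀ x then f i else y, by simp [hf0], by simp, ?_⟩
  intro i hi
  rcases Nat.lt_or_ge i (graphDist b x₀ x) with h1 | h1
  · simp only [if_pos (Nat.le_of_lt h1), if_pos (Nat.succ_le_of_lt h1)]
    exact hstep i h1
  · have hin : i = graphDist b x₀ x := by omega
    subst hin
    simp only [le_refl, if_pos, if_neg (Nat.not_succ_le_self _), hfn]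
    exact hxy

lemma exists_pred' {x : V} {r : ℕ}
    (h : Relation.ReflTransGen (fun a c => 0 < b a c) x₀ x)
    (hr : graphDist b x₀ x = r + 1) :
    ∃ y, 0 < b y x ∧ graphDist b x₀ y ≤ r := by
  obtain ⟨f, hf0, hfn, hstep⟩ := graphDist_spec b x₀ h
  rw [hr] at hfn hstep
  refine ⟨f r, ?_, graphDist_le b x₀ ⟨f, hf0, rfl, fun i hi => hstep i (by omega)⟩⟩
  have h2 := hstep r (Nat.lt_succ_self r)
  rwa [hfn] at h2

lemma ball_finite
    (hconn : ∀ x, Relation.ReflTransGen (fun a c => 0 < b a c) x₀ x)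
    (hfin : ∀ x : V, {y | 0 < b x y}.Finite) (R : ℕ) :
    {x : V | graphDist b x₀ x ≤ R}.Finite := by
  induction R with
  | zero =>
    refine (Set.finite_singleton x₀).subset ?_
    intro x hx
    simp only [Set.mem_setOf_eq, Nat.le_zero] at hx
    simp [eq_of_graphDist_zero b x₀ (hconn x) hx]
  | succ R ih =>
    refine (ih.union (ih.biUnion fun y _ => hfin y)).subset ?_
    intro x hx
    simp only [Set.mem_setOf_eq] at hx
    rcases Nat.lt_or_ge (graphDist b x₀ x) (R + 1) with h1 | h1
    · exact Or.inl (show graphDist b x₀ x ≤ R by omega)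
    · have hr : graphDist b x₀ x = R + 1 := by omega
      obtain ⟨y, hyx, hy⟩ := exists_pred' b x₀ (hconn x) hr
      exact Or.inr (Set.mem_biUnion (show graphDist b x₀ y ≤ R from hy) hyx)

end aux

noncomputable def alphaSeq (C μ : ℝ) : ℕ → ℝ
  | 0 => 1
  | r + 1 => alphaSeq C μ r * (C * (r + 1)) / (C * (r + 1) + μ)

section alpha
variable {C μ : ℝ} (hC : 0 < C) (hμ : 0 < μ)
include hC hμ

lemma alphaSeq_pos : ∀ r, 0 < alphaSeq C μ r := by
  intro r
  induction r with
  | zero => norm_num [alphaSeq]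
  | succ r ih =>
    have h1 : (0:ℝ) < C * (r + 1) := by positivity
    have h2 : (0:ℝ) < C * (r + 1) + μ := by positivity
    rw [alphaSeq]
    positivity

lemma alphaSeq_antitone : Antitone (alphaSeq C μ) := by
  refine antitone_nat_of_succ_le fun r => ?_
  have h2 : (0:ℝ) < C * (r + 1) + μ := by positivity
  rw [alphaSeq, div_le_iff₀ h2]
  nlinarith [alphaSeq_pos hC hμ r]

lemma alphaSeq_identity (s : ℕ) :
    (alphaSeq C μ (s + 1) - alphaSeq C μ s) * (C * (s + 1)) = -μ * alphaSeq C μ (s + 1) := by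
  have h2 : (0:ℝ) < C * (s + 1) + μ := by positivity
  rw [show alphaSeq C μ (s+1) = alphaSeq C μ s * (C * (s + 1)) / (C * (s + 1) + μ) from rfl]
  field_simp
  ring

lemma alphaSeq_bound (r : ℕ) :
    alphaSeq C μ r * (1 + (μ / C) * ∑ k ∈ Finset.range r, (1:ℝ) / (k + 1)) ≤ 1 := by
  induction r with
  | zero => simp [alphaSeq]
  | succ s ih =>
    have hH : (0:ℝ) ≤ ∑ k ∈ Finset.range s, (1:ℝ) / (k + 1) := by positivity
    set H := ∑ k ∈ Finset.range s, (1:ℝ) / (k + 1) with hHdef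
    have hden : (0:ℝ) < C * (s + 1) + μ := by positivity
    have hn : (0:ℝ) < (s:ℝ) + 1 := by positivity
    have ha := alphaSeq_pos hC hμ s
    rw [Finset.sum_range_succ, ← hHdef,
      show alphaSeq C μ (s+1) = alphaSeq C μ s * (C * (s + 1)) / (C * (s + 1) + μ) from rfl]
    have key : (C * (s + 1)) / (C * (s + 1) + μ) * (1 + (μ / C) * (H + 1 / (s + 1)))
        ≤ 1 + (μ / C) * H := by
      rw [div_mul_eq_mul_div, div_le_iff₀ hden]
      have hCne : C ≠ 0 := ne_of_gt hC
      have hnne : (s:ℝ) + 1 ≠ 0 := ne_of_gt hn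
      field_simp
      nlinarith [mul_nonneg (mul_nonneg hμ.le hμ.le) hH]
    calc alphaSeq C μ s * (C * (s + 1)) / (C * (s + 1) + μ) * (1 + μ / C * (H + 1 / (s + 1)))
        = alphaSeq C μ s * ((C * (s + 1)) / (C * (s + 1) + μ) * (1 + (μ / C) * (H + 1 / (s + 1)))) := by
          ring
      _ ≤ alphaSeq C μ s * (1 + (μ / C) * H) := mul_le_mul_of_nonneg_left key ha.le
      _ ≤ 1 := ih

lemma alphaSeq_small {ε : ℝ} (hε : 0 < ε) : ∃ R : ℕ, alphaSeq C μ R < ε := by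
  obtain ⟨R, hR⟩ := (Real.tendsto_sum_range_one_div_nat_succ_atTop.eventually_ge_atTop
    ((1 / ε) * (C / μ))).exists
  refine ⟨R, ?_⟩
  have hH : (1 / ε) * (C / μ) ≤ ∑ k ∈ Finset.range R, (1:ℝ) / (k + 1) := by
    exact hR
  have hb := alphaSeq_bound hC hμ R
  have ha := alphaSeq_pos hC hμ R
  have h1 : 1 / ε < 1 + (μ / C) * ∑ k ∈ Finset.range R, (1:ℝ) / (k + 1) := by
    have : (μ / C) * ((1 / ε) * (C / μ)) ≤ (μ / C) * ∑ k ∈ Finset.range R, (1:ℝ) / (k + 1) :=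
      mul_le_mul_of_nonneg_left hH (by positivity)
    have heq : (μ / C) * ((1 / ε) * (C / μ)) = 1 / ε := by
      field_simp
    linarith
  have h2 : alphaSeq C μ R * (1 / ε) < alphaSeq C μ R * (1 + (μ / C) * ∑ k ∈ Finset.range R, (1:ℝ) / (k + 1)) :=
    mul_lt_mul_of_pos_left h1 ha
  have h3 : alphaSeq C μ R * (1 / ε) < 1 := lt_of_lt_of_le h2 hb
  rw [mul_one_div, div_lt_one hε] at h3
  exact h3

end alpha

/-- Corollary: if `D_-(r) = max_{x ∈ S_r} Deg_-(x)` grows at most linearly,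
`D_-(r) ≤ C·r` for all `r ≥ 1`, then for every `λ < 0` there is a positive function `v`
vanishing at infinity with `𝓛v ≥ λ·v`; in particular the graph is Feller. -/
theorem stmt3 {V : Type*} [Countable V] [Infinite V]
    (b : V → V → ℝ) (m : V → ℝ) (hwg : IsWeightedGraph b m) (x₀ : V)
    (D : ℕ → ℝ)
    (hD : ∀ r : ℕ, 1 ≤ r →
      IsGreatest (degMinus b m x₀ '' sphere' b x₀ r) (D r))
    (C : ℝ) (hC : 0 < C)
    (hgrow : ∀ r : ℕ, 1 ≤ r → D r ≤ C * r) :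
    ∀ lam : ℝ, lam < 0 → ∃ v : V → ℝ,
      (∀ x, 0 < v x) ∧ VanishesAtInfty v ∧ ∀ x, lam * v x ≤ lap b m v x := by
  obtain ⟨hb0, hsym, hdiag, hfin, hm, hconn⟩ := hwg
  intro lam hlam
  have hμ : (0:ℝ) < -lam := by linarith
  set μ : ℝ := -lam with hμdef
  set v : V → ℝ := fun x => alphaSeq C μ (graphDist b x₀ x) with hv
  have hvpos : ∀ x, 0 < v x := fun x => alphaSeq_pos hC hμ _
  refine ⟨v, hvpos, ?_, ?_⟩
  · -- vanishes at infinity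
    intro ε hε
    obtain ⟨R, hR⟩ := alphaSeq_small hC hμ hε
    refine (ball_finite b x₀ (fun x => hconn x₀ x) hfin R).subset ?_
    intro x hx
    simp only [Set.mem_setOf_eq] at hx ⊢
    by_contra hcon
    push_neg at hcon
    have h1 : alphaSeq C μ (graphDist b x₀ x) ≤ alphaSeq C μ R :=
      alphaSeq_antitone hC hμ (le_of_lt hcon)
    rw [abs_of_pos (hvpos x)] at hx
    have h2 : v x = alphaSeq C μ (graphDist b x₀ x) := rfl
    rw [h2] at hx
    linarith
  · -- Laplacian inequality
    intro x
    have hbz : ∀ y ∉ (hfin x).toFinset, b x y = 0 := by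
      intro y hy
      rw [Set.Finite.mem_toFinset] at hy
      exact le_antisymm (not_lt.mp hy) (hb0 x y)
    have hmx : (0:ℝ) < m x := hm x
    have hlapx : lap b m v x = (1 / m x) * ∑ y ∈ (hfin x).toFinset, b x y * (v x - v y) := by
      unfold lap
      rw [tsum_eq_sum (fun y hy => by rw [hbz y hy]; ring)]
    have hdeg : degMinus b m x₀ x = (1 / m x) * ∑ y ∈ (hfin x).toFinset,
        (if graphDist b x₀ y + 1 = graphDist b x₀ x then b x y else 0) := by
      unfold degMinus
      rw [tsum_eq_sum (fun y hy => by rw [hbz y hy]; simp)]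
    rcases hrx : graphDist b x₀ x with _ | k
    · -- x is the base point (distance 0)
      have hv0 : v x = alphaSeq C μ 0 := by simp only [hv]; rw [hrx]
      have hsum : (0:ℝ) ≤ ∑ y ∈ (hfin x).toFinset, b x y * (v x - v y) := by
        refine Finset.sum_nonneg fun y hy => ?_
        refine mul_nonneg (hb0 x y) ?_
        have h1 : v y ≤ alphaSeq C μ 0 := alphaSeq_antitone hC hμ (Nat.zero_le _)
        rw [hv0]; linarith
      have h2 : lam * v x < 0 := mul_neg_of_neg_of_pos hlam (hvpos x)
      rw [hlapx]
      have h3 : (0:ℝ) ≤ (1 / m x) * ∑ y ∈ (hfin x).toFinset, b x y * (v x - v y) :=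
        mul_nonneg (by positivity) hsum
      linarith
    · -- x is at distance k+1
      have hΔ : alphaSeq C μ (k + 1) - alphaSeq C μ k ≤ 0 := by
        have := alphaSeq_antitone (C := C) (μ := μ) hC hμ (Nat.le_succ k)
        linarith
      have hub : degMinus b m x₀ x ≤ C * ((k:ℝ) + 1) := by
        have h1 : degMinus b m x₀ x ≤ D (k + 1) :=
          (hD (k + 1) (by omega)).2 ⟨x, hrx, rfl⟩
        have h2 := hgrow (k + 1) (by omega)
        push_cast at h2
        linarith
      have hvx : v x = alphaSeq C μ (k + 1) := by simp only [hv]; rw [hrx]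
      have hsum : ∑ y ∈ (hfin x).toFinset,
          (if graphDist b x₀ y + 1 = graphDist b x₀ x then b x y else 0)
            * (alphaSeq C μ (k + 1) - alphaSeq C μ k)
          ≤ ∑ y ∈ (hfin x).toFinset, b x y * (v x - v y) := by
        refine Finset.sum_le_sum fun y hy => ?_
        have hby : 0 < b x y := by
          rw [Set.Finite.mem_toFinset] at hy
          exact hy
        by_cases hcond : graphDist b x₀ y + 1 = graphDist b x₀ x
        · rw [if_pos hcond]
          have hdy : graphDist b x₀ y = k := by omega
          have hvy : v y = alphaSeq C μ k := by simp only [hv]; rw [hdy]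
          rw [hvx, hvy]
        · rw [if_neg hcond, zero_mul]
          have h1 : graphDist b x₀ x ≤ graphDist b x₀ y + 1 := by
            refine graphDist_le_of_adj b x₀ (hconn x₀ y) ?_
            rw [hsym y x]
            exact hby
          have hdy : k + 1 ≤ graphDist b x₀ y := by omega
          have hvy : v y ≤ alphaSeq C μ (k + 1) := alphaSeq_antitone hC hμ hdy
          have h2 : 0 ≤ v x - v y := by rw [hvx]; linarith
          exact mul_nonneg hby.le h2
      have e1 : ∑ y ∈ (hfin x).toFinset,
          (if graphDist b x₀ y + 1 = graphDist b x₀ x then b x y else 0)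
            * (alphaSeq C μ (k + 1) - alphaSeq C μ k)
          = (∑ y ∈ (hfin x).toFinset,
              (if graphDist b x₀ y + 1 = graphDist b x₀ x then b x y else 0))
            * (alphaSeq C μ (k + 1) - alphaSeq C μ k) := by
        rw [Finset.sum_mul]
      have h4 : (1 / m x) * (∑ y ∈ (hfin x).toFinset,
            (if graphDist b x₀ y + 1 = graphDist b x₀ x then b x y else 0)
              * (alphaSeq C μ (k + 1) - alphaSeq C μ k))
          ≤ lap b m v x := by
        rw [hlapx]
        exact mul_le_mul_of_nonneg_left hsum (by positivity)
      have h5 : (1 / m x) * (∑ y ∈ (hfin x).toFinset,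
            (if graphDist b x₀ y + 1 = graphDist b x₀ x then b x y else 0)
              * (alphaSeq C μ (k + 1) - alphaSeq C μ k))
          = degMinus b m x₀ x * (alphaSeq C μ (k + 1) - alphaSeq C μ k) := by
        rw [e1, hdeg]; ring
      have h6 : C * ((k:ℝ) + 1) * (alphaSeq C μ (k + 1) - alphaSeq C μ k)
          ≤ degMinus b m x₀ x * (alphaSeq C μ (k + 1) - alphaSeq C μ k) :=
        mul_le_mul_of_nonpos_right hub hΔ
      have h7 : C * ((k:ℝ) + 1) * (alphaSeq C μ (k + 1) - alphaSeq C μ k)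
          = lam * v x := by
        have hid := alphaSeq_identity (C := C) (μ := μ) hC hμ k
        rw [hvx]
        rw [hμdef] at hid
        nlinarith [hid]
      rw [h5] at h4
      linarith
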